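/- Let p > 2 be a real number. There exist constants c₁ > 0 and C > 0, depending only on p, with the following property. Let 1 ≤ k ≤ n be integers, let 0 < ε ≤ 1, and let x, x̂ ∈ ℝⁿ satisfy |x̂_i − x_i| ≤ ε^{p/(p−1)}·‖x_{−k}‖_p / (c₁ k^{1/p}) for every i. Let J be a top-k set for x̂, and let x̂_J ∈ ℝⁿ be the k-sparse vector with (x̂_J)_j = x̂_j for j ∈ J and (x̂_J)_j = 0 for j ∉ J. Then | ‖x − x̂_J‖_p^p − ‖x_{−k}‖_p^p | ≤ C·ε·‖x_{−k}‖_p^p; in particular ‖x − x̂_J‖_p^p ≤ (1 + Cε)·‖x_{−k}‖_p^p. (The deterministic core of the paper's Theorems 4.5 and 4.6: the k-sparse vector built from the estimated top-k coordinates solves the (1+O(ε))-approximate ℓ_p sparse recovery problem, and its residual p-norm is a (1±O(ε))-approximation of the k-residual ‖x_{−k}‖_p^p.) -/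

import Mathlib

open Finset

/-- `I` is a top-`k` set for `x`: it has `k` elements and every coordinate in `I`
dominates (in absolute value) every coordinate outside `I`. -/
def IsTopK {n : ℕ} (k : ℕ) (x : Fin n → ℝ) (I : Finset (Fin n)) : Prop :=
  I.card = k ∧ ∀ i ∈ I, ∀ j ∉ I, |x j| ≤ |x i|

/-- The `ℓ_p` norm of a vector in `ℝⁿ` (for a real exponent `p`). -/
noncomputable def lpNorm (p : ℝ) {n : ℕ} (x : Fin n → ℝ) : ℝ :=
  (∑ i, |x i| ^ p) ^ (1 / p)

/-- The `k`-residual norm `‖x_{-k}‖_p` with respect to a top-`k` set `I`: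
the `ℓ_p` norm of `x` restricted to the complement of `I`. -/
noncomputable def residNorm (p : ℝ) {n : ℕ} (x : Fin n → ℝ) (I : Finset (Fin n)) : ℝ :=
  (∑ i ∈ Iᶜ, |x i| ^ p) ^ (1 / p)

lemma mvt_rpow {p : ℝ} (hp : 1 ≤ p) {a b : ℝ} (ha : 0 ≤ a) (hb : 0 ≤ b) :
    (a + b) ^ p ≤ a ^ p + p * (a + b) ^ (p - 1) * b := by
  rcases eq_or_lt_of_le hb with h | h
  · simp [← h]
  have hab : a < a + b := by linarith
  obtain ⟨c, hc, hderiv⟩ := exists_hasDerivAt_eq_slope (fun x => x ^ p)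
    (fun x => p * x ^ (p - 1)) hab
    (fun x _ => (Real.continuousAt_rpow_const x p (Or.inr (by linarith))).continuousWithinAt)
    (fun x _ => Real.hasDerivAt_rpow_const (Or.inr hp))
  have hc1 : c ^ (p - 1) ≤ (a + b) ^ (p - 1) :=
    Real.rpow_le_rpow (by nlinarith [hc.1]) hc.2.le (by linarith)
  have heq : (a + b) ^ p - a ^ p = p * c ^ (p - 1) * b := by
    rw [add_sub_cancel_left, eq_div_iff h.ne'] at hderiv
    linarith [hderiv]
  have h2 := mul_le_mul_of_nonneg_right
    (mul_le_mul_of_nonneg_left hc1 (by linarith : (0:ℝ) ≤ p)) hb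
  linarith

lemma eps_split {p : ℝ} (hp : 1 ≤ p) {a t ε : ℝ} (ha : 0 ≤ a) (ht : 0 ≤ t)
    (hε : 0 < ε) (hε1 : ε ≤ 1) :
    (a + t) ^ p ≤ (1 + p * 2 ^ (p - 1) * ε) * a ^ p + (2 / ε) ^ p * t ^ p := by
  have hp0 : (0:ℝ) < p := by linarith
  have h2e : (0:ℝ) ≤ (2 / ε) ^ p * t ^ p :=
    mul_nonneg (Real.rpow_nonneg (by positivity) _) (Real.rpow_nonneg ht _)
  by_cases h : t ≤ ε * a
  · have h1 : (a + t) ^ p ≤ ((1 + ε) * a) ^ p :=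
      Real.rpow_le_rpow (by linarith) (by nlinarith) hp0.le
    have h2 : ((1 + ε) * a) ^ p = (1 + ε) ^ p * a ^ p :=
      Real.mul_rpow (by linarith) ha
    have h3 : (1 + ε) ^ p ≤ 1 + p * 2 ^ (p - 1) * ε := by
      have hm := mvt_rpow hp (by norm_num : (0:ℝ) ≤ 1) hε.le
      rw [Real.one_rpow] at hm
      have h2p : (1 + ε) ^ (p - 1) ≤ 2 ^ (p - 1) :=
        Real.rpow_le_rpow (by linarith) (by linarith) (by linarith)
      have := mul_le_mul_of_nonneg_right
        (mul_le_mul_of_nonneg_left h2p (by linarith : (0:ℝ) ≤ p)) hε.le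
      linarith
    have hap : 0 ≤ a ^ p := Real.rpow_nonneg ha _
    have := mul_le_mul_of_nonneg_right h3 hap
    linarith
  · push_neg at h
    have hat : a + t ≤ 2 / ε * t := by
      rw [div_mul_eq_mul_div, le_div_iff₀ hε]
      nlinarith
    have h1 : (a + t) ^ p ≤ (2 / ε * t) ^ p :=
      Real.rpow_le_rpow (by linarith) hat hp0.le
    have h2 : (2 / ε * t) ^ p = (2 / ε) ^ p * t ^ p := Real.mul_rpow (by positivity) ht
    have ha' : 0 ≤ (1 + p * 2 ^ (p - 1) * ε) * a ^ p := by
      have : (0:ℝ) ≤ p * 2 ^ (p-1) * ε := by positivity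
      exact mul_nonneg (by linarith) (Real.rpow_nonneg ha _)
    linarith [h1, h2.le, h2.ge]

lemma sum_le_sum_of_card_eq {α β : Type*} {s : Finset α} {t : Finset β}
    (h : s.card = t.card) {f : α → ℝ} {g : β → ℝ}
    (hfg : ∀ a ∈ s, ∀ b ∈ t, f a ≤ g b) : ∑ a ∈ s, f a ≤ ∑ b ∈ t, g b := by
  classical
  let e := Finset.equivOfCardEq h
  calc ∑ a ∈ s, f a = ∑ a : ↥s, f ↑a := (Finset.sum_coe_sort s f).symm
    _ ≤ ∑ a : ↥s, g ↑(e a) := Finset.sum_le_sum (fun a _ => hfg a a.2 (e a) (e a).2)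
    _ = ∑ b : ↥t, g ↑b := Equiv.sum_comp e (fun b => g ↑b)
    _ = ∑ b ∈ t, g b := Finset.sum_coe_sort t g

theorem sparse_recovery_approximation (p : ℝ) (hp : 2 < p) :
    ∃ c₁ > (0 : ℝ), ∃ C > (0 : ℝ),
      ∀ (n k : ℕ), 1 ≤ k → k ≤ n →
      ∀ ε : ℝ, 0 < ε → ε ≤ 1 →
      ∀ (x xhat : Fin n → ℝ) (I J : Finset (Fin n)),
        IsTopK k x I → IsTopK k xhat J →
        (∀ i, |xhat i - x i| ≤
          ε ^ (p / (p - 1)) * residNorm p x I / (c₁ * (k : ℝ) ^ (1 / p))) →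
        ∀ xhatJ : Fin n → ℝ, (∀ j, xhatJ j = if j ∈ J then xhat j else 0) →
          |(∑ i, |x i - xhatJ i| ^ p) - ∑ i ∈ Iᶜ, |x i| ^ p| ≤
            C * ε * ∑ i ∈ Iᶜ, |x i| ^ p ∧
          (∑ i, |x i - xhatJ i| ^ p) ≤ (1 + C * ε) * ∑ i ∈ Iᶜ, |x i| ^ p := by
  have hp0 : (0:ℝ) < p := by linarith
  have hp1 : (1:ℝ) ≤ p := by linarith
  have hp1' : (0:ℝ) < p - 1 := by linarith
  have h2p : (0:ℝ) ≤ p * 2 ^ (p - 1) :=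
    mul_nonneg hp0.le (Real.rpow_nonneg (by norm_num) _)
  have h4p : (0:ℝ) ≤ (4:ℝ) ^ p := Real.rpow_nonneg (by norm_num) _
  refine ⟨1, one_pos, 1 + p * 2 ^ (p - 1) + 4 ^ p, by linarith, ?_⟩
  intro n k hk1 hkn ε hε hε1 x xhat I J hI hJ herr xhatJ hxhatJ
  set q : ℝ := p / (p - 1) with hq
  have hq1 : 1 ≤ q := by
    rw [hq, le_div_iff₀ hp1']; linarith
  have hqp : q * p = p + q := by
    rw [hq]; field_simp; ring
  set S : ℝ := ∑ i ∈ Iᶜ, |x i| ^ p with hSdef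
  have hS0 : 0 ≤ S := Finset.sum_nonneg fun i _ => Real.rpow_nonneg (abs_nonneg _) _
  have hkpos : (0:ℝ) < (k : ℝ) := by exact_mod_cast hk1
  set δ : ℝ := ε ^ q * residNorm p x I / (1 * (k : ℝ) ^ (1 / p)) with hδdef
  have hRdef : residNorm p x I = S ^ (1 / p) := by rw [residNorm]
  have hδ0 : 0 ≤ δ := by
    rw [hδdef, hRdef, one_mul]
    exact div_nonneg (mul_nonneg (Real.rpow_nonneg hε.le _) (Real.rpow_nonneg hS0 _))
      (Real.rpow_nonneg hkpos.le _)
  have hδp : δ ^ p * k = ε ^ (q * p) * S := by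
    rw [hδdef, hRdef, one_mul,
      Real.div_rpow (mul_nonneg (Real.rpow_nonneg hε.le _) (Real.rpow_nonneg hS0 _))
        (Real.rpow_nonneg hkpos.le _),
      Real.mul_rpow (Real.rpow_nonneg hε.le _) (Real.rpow_nonneg hS0 _),
      ← Real.rpow_mul hε.le, ← Real.rpow_mul hS0, ← Real.rpow_mul hkpos.le,
      one_div, inv_mul_cancel₀ hp0.ne', Real.rpow_one, Real.rpow_one,
      div_mul_cancel₀ _ hkpos.ne']
  -- epsilon power facts
  have hεq : ε ^ q ≤ ε := by
    calc ε ^ q ≤ ε ^ (1:ℝ) := Real.rpow_le_rpow_of_exponent_ge hε hε1 hq1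
    _ = ε := Real.rpow_one ε
  have hεqp : ε ^ (q * p) ≤ ε := by
    calc ε ^ (q * p) ≤ ε ^ (1:ℝ) :=
      Real.rpow_le_rpow_of_exponent_ge hε hε1 (by nlinarith)
    _ = ε := Real.rpow_one ε
  -- the head error term A
  set A : ℝ := ∑ j ∈ J, |x j - xhatJ j| ^ p with hAdef
  have hA0 : 0 ≤ A := Finset.sum_nonneg fun i _ => Real.rpow_nonneg (abs_nonneg _) _
  have hAε : A ≤ ε * S := by
    have hle : A ≤ ε ^ (q * p) * S := by
      calc A ≤ ∑ _j ∈ J, δ ^ p := by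
            apply Finset.sum_le_sum
            intro j hj
            rw [hxhatJ j, if_pos hj]
            exact Real.rpow_le_rpow (abs_nonneg _)
              (by rw [abs_sub_comm]; exact herr j) hp0.le
        _ = J.card * δ ^ p := by rw [Finset.sum_const, nsmul_eq_mul]
        _ = δ ^ p * k := by rw [hJ.1]; ring
        _ = ε ^ (q * p) * S := hδp
    exact hle.trans (mul_le_mul_of_nonneg_right hεqp hS0)
  -- cardinalities
  have hcardIJ : (I \ J).card = (J \ I).card := by
    have h1 := Finset.card_inter_add_card_sdiff I J
    have h2 := Finset.card_inter_add_card_sdiff J I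
    rw [Finset.inter_comm] at h2
    rw [hI.1] at h1; rw [hJ.1] at h2
    omega
  have hcardJI : ((J \ I).card : ℝ) ≤ (k : ℝ) := by
    have := Finset.card_le_card (Finset.sdiff_subset : J \ I ⊆ J)
    rw [hJ.1] at this
    exact_mod_cast this
  -- sum decompositions
  set D1 : ℝ := ∑ i ∈ I \ J, |x i| ^ p with hD1def
  set D2 : ℝ := ∑ i ∈ J \ I, |x i| ^ p with hD2def
  have hunion : ∑ i ∈ Jᶜ, |x i| ^ p + D2 = S + D1 := by
    rw [hSdef, hD1def, hD2def,
      ← Finset.sum_union (disjoint_compl_left.mono_right Finset.sdiff_subset),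
      ← Finset.sum_union (disjoint_compl_left.mono_right Finset.sdiff_subset)]
    apply Finset.sum_congr _ (fun _ _ => rfl)
    ext a
    simp only [Finset.mem_union, Finset.mem_compl, Finset.mem_sdiff]
    tauto
  -- swap bounds
  have hD21 : D2 ≤ D1 := by
    apply sum_le_sum_of_card_eq hcardIJ.symm
    intro b hb a ha
    simp only [Finset.mem_sdiff] at ha hb
    exact Real.rpow_le_rpow (abs_nonneg _) (hI.2 a ha.1 b hb.2) hp0.le
  have hD1up : D1 ≤ ∑ b ∈ J \ I, (|x b| + 2 * δ) ^ p := by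
    apply sum_le_sum_of_card_eq hcardIJ
    intro a ha b hb
    simp only [Finset.mem_sdiff] at ha hb
    have h1 := hJ.2 b hb.1 a ha.2
    have h4 : |x a| - |xhat a| ≤ |x a - xhat a| := abs_sub_abs_le_abs_sub _ _
    have h5 : |xhat b| - |x b| ≤ |xhat b - x b| := abs_sub_abs_le_abs_sub _ _
    have h6 : |x a - xhat a| = |xhat a - x a| := abs_sub_comm _ _
    have h7 := herr a
    have h8 := herr b
    exact Real.rpow_le_rpow (abs_nonneg _) (by linarith) hp0.le
  -- bound the swapped sum
  have hD2S : D2 ≤ S := by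
    apply Finset.sum_le_sum_of_subset_of_nonneg
    · intro b hb
      simp only [Finset.mem_sdiff] at hb
      exact Finset.mem_compl.2 hb.2
    · intro i _ _
      exact Real.rpow_nonneg (abs_nonneg _) _
  have hpow4 : (2:ℝ) ^ p * 2 ^ p = 4 ^ p := by
    rw [← Real.mul_rpow (by norm_num) (by norm_num)]; norm_num
  have hεppos : (0:ℝ) < ε ^ p := Real.rpow_pos_of_pos hε p
  have hEnn : (0:ℝ) ≤ (2 / ε) ^ p * (2 * δ) ^ p :=
    mul_nonneg (Real.rpow_nonneg (by positivity) _) (Real.rpow_nonneg (by linarith) _)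
  have hkey : (2 / ε) ^ p * (2 * δ) ^ p * (k:ℝ) = 4 ^ p * (ε ^ q * S) := by
    rw [Real.mul_rpow (by norm_num) hδ0, Real.div_rpow (by norm_num) hε.le]
    have h2' : ε ^ (q * p) = ε ^ p * ε ^ q := by rw [hqp, Real.rpow_add hε]
    rw [div_mul_eq_mul_div, div_mul_eq_mul_div, div_eq_iff hεppos.ne']
    calc (2:ℝ) ^ p * (2 ^ p * δ ^ p) * k = (2 ^ p * 2 ^ p) * (δ ^ p * k) := by ring
      _ = 4 ^ p * (ε ^ p * ε ^ q * S) := by rw [hpow4, hδp, h2']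
      _ = 4 ^ p * (ε ^ q * S) * ε ^ p := by ring
  have hsum2 : ∑ b ∈ J \ I, (|x b| + 2 * δ) ^ p
      ≤ D2 + p * 2 ^ (p - 1) * ε * S + 4 ^ p * ε * S := by
    calc ∑ b ∈ J \ I, (|x b| + 2 * δ) ^ p
        ≤ ∑ b ∈ J \ I, ((1 + p * 2 ^ (p - 1) * ε) * |x b| ^ p
            + (2 / ε) ^ p * (2 * δ) ^ p) :=
          Finset.sum_le_sum fun b _ =>
            eps_split hp1 (abs_nonneg _) (by linarith) hε hε1
      _ = (1 + p * 2 ^ (p - 1) * ε) * D2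
            + ((J \ I).card : ℝ) * ((2 / ε) ^ p * (2 * δ) ^ p) := by
          rw [Finset.sum_add_distrib, ← Finset.mul_sum, Finset.sum_const, nsmul_eq_mul]
      _ ≤ (1 + p * 2 ^ (p - 1) * ε) * D2 + (k : ℝ) * ((2 / ε) ^ p * (2 * δ) ^ p) := by
          have := mul_le_mul_of_nonneg_right hcardJI hEnn
          linarith
      _ = D2 + p * 2 ^ (p - 1) * ε * D2 + 4 ^ p * (ε ^ q * S) := by
          rw [← hkey]; ring
      _ ≤ D2 + p * 2 ^ (p - 1) * ε * S + 4 ^ p * ε * S := by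
          have hc : (0:ℝ) ≤ p * 2 ^ (p - 1) * ε := mul_nonneg h2p hε.le
          have h1 := mul_le_mul_of_nonneg_left hD2S hc
          have h2 : 4 ^ p * (ε ^ q * S) ≤ 4 ^ p * (ε * S) :=
            mul_le_mul_of_nonneg_left (mul_le_mul_of_nonneg_right hεq hS0) h4p
          linarith [h1, h2]
  -- total decomposition
  have hT : ∑ i, |x i - xhatJ i| ^ p = A + ∑ i ∈ Jᶜ, |x i| ^ p := by
    rw [← Finset.sum_add_sum_compl J]
    congr 1
    apply Finset.sum_congr rfl
    intro i hi
    rw [Finset.mem_compl] at hi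
    rw [hxhatJ i, if_neg hi, sub_zero]
  have hfinal : ∑ i, |x i - xhatJ i| ^ p - S = A + (D1 - D2) := by
    rw [hT]; linarith [hunion]
  have hDdiff : D1 - D2 ≤ (p * 2 ^ (p - 1) + 4 ^ p) * ε * S := by
    have := hD1up.trans hsum2
    linarith [this]
  constructor
  · rw [hfinal, abs_of_nonneg (by linarith)]
    linarith [hAε, hDdiff]
  · linarith [hfinal, hAε, hDdiff]
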